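/- Let k ≥ 1 and let ψ⁻ = (|01⟩ − |10⟩)/√2 ∈ ℂ² ⊗ ℂ² be the singlet state. There is no positive semidefinite matrix ρ on ℂ² ⊗ ℂ² ⊗ ℂ^k with trace 1 such that both the partial trace of ρ over the third tensor factor equals |ψ⁻⟩⟨ψ⁻| and the partial trace of ρ over the second tensor factor equals |ψ⁻⟩⟨ψ⁻|. -/

import Mathlib

open scoped Matrix ComplexOrder

/-- The singlet state `ψ⁻ = (|01⟩ - |10⟩)/√2` as a vector in `ℂ² ⊗ ℂ²`. -/
noncomputable def singletVec : Fin 2 × Fin 2 → ℂ := fun p =>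
  if p = (0, 1) then ((Real.sqrt 2 : ℝ)⁻¹ : ℂ)
  else if p = (1, 0) then -((Real.sqrt 2 : ℝ)⁻¹ : ℂ) else 0

/-- The rank-one projection `|ψ⁻⟩⟨ψ⁻|` onto the singlet. -/
noncomputable def singletMat : Matrix (Fin 2 × Fin 2) (Fin 2 × Fin 2) ℂ :=
  Matrix.vecMulVec singletVec (star singletVec)

/-- The singlet vector viewed inside `ℂ² ⊗ ℂ^k` (via the first two basis vectors of `ℂ^k`). -/
noncomputable def singletVecK (k : ℕ) : Fin 2 × Fin k → ℂ := fun p =>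
  if h : (p.2 : ℕ) < 2 then singletVec (p.1, ⟨(p.2 : ℕ), h⟩) else 0

/-- The rank-one projection onto the singlet inside `ℂ² ⊗ ℂ^k`. -/
noncomputable def singletMatK (k : ℕ) : Matrix (Fin 2 × Fin k) (Fin 2 × Fin k) ℂ :=
  Matrix.vecMulVec (singletVecK k) (star (singletVecK k))

lemma psd_eq_conjTranspose_mul_self {n : Type*} [Fintype n] [DecidableEq n] {M : Matrix n n ℂ}
    (hM : M.PosSemidef) : ∃ B : Matrix n n ℂ, M = Bᴴ * B := by
  open scoped MatrixOrder Matrix.Norms.L2Operator in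
  exact CStarAlgebra.nonneg_iff_eq_star_mul_self.mp hM.nonneg

lemma psd_diag_real {n : Type*} [Fintype n] [DecidableEq n] {M : Matrix n n ℂ}
    (hM : M.PosSemidef) (x : n) :
    ∃ r : ℝ, 0 ≤ r ∧ M x x = (r : ℂ) := by
  obtain ⟨B, rfl⟩ := psd_eq_conjTranspose_mul_self hM
  refine ⟨∑ i, Complex.normSq (B i x), Finset.sum_nonneg fun i _ => Complex.normSq_nonneg _, ?_⟩
  simp [Matrix.mul_apply, Matrix.conjTranspose_apply, Complex.star_def,
    Complex.normSq_eq_conj_mul_self]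

lemma psd_row_zero {n : Type*} [Fintype n] [DecidableEq n] {M : Matrix n n ℂ}
    (hM : M.PosSemidef) {x : n} (hx : M x x = 0) (y : n) : M x y = 0 := by
  obtain ⟨B, rfl⟩ := psd_eq_conjTranspose_mul_self hM
  have h1 : ((∑ i, Complex.normSq (B i x) : ℝ) : ℂ) = 0 := by
    rw [← hx]
    simp [Matrix.mul_apply, Matrix.conjTranspose_apply, Complex.star_def,
      Complex.normSq_eq_conj_mul_self]
  have h2 : ∀ i, B i x = 0 := by
    intro i
    have := (Finset.sum_eq_zero_iff_of_nonneg
      (fun i _ => Complex.normSq_nonneg (B i x))).mp (by exact_mod_cast h1) i (Finset.mem_univ i)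
    exact Complex.normSq_eq_zero.mp this
  simp [Matrix.mul_apply, Matrix.conjTranspose_apply, h2]

lemma psd_col_zero {n : Type*} [Fintype n] [DecidableEq n] {M : Matrix n n ℂ}
    (hM : M.PosSemidef) {x : n} (hx : M x x = 0) (y : n) : M y x = 0 := by
  have := psd_row_zero hM hx y
  rw [← hM.isHermitian.apply y x, this, star_zero]

lemma sum_two_zero {a b : ℂ} (ha : ∃ r : ℝ, 0 ≤ r ∧ a = (r : ℂ))
    (hb : ∃ r : ℝ, 0 ≤ r ∧ b = (r : ℂ)) (h : a + b = 0) : a = 0 ∧ b = 0 := by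
  obtain ⟨r, hr, rfl⟩ := ha
  obtain ⟨s, hs, rfl⟩ := hb
  have : r + s = 0 := by exact_mod_cast h
  constructor <;> · norm_cast; linarith

theorem stmt15 {k : ℕ} (hk : 1 ≤ k) :
    ¬ ∃ ρ : Matrix (Fin 2 × Fin 2 × Fin k) (Fin 2 × Fin 2 × Fin k) ℂ,
      ρ.PosSemidef ∧ ρ.trace = 1 ∧
      (Matrix.of fun p q : Fin 2 × Fin 2 =>
        ∑ c : Fin k, ρ (p.1, p.2, c) (q.1, q.2, c)) = singletMat ∧
      (Matrix.of fun p q : Fin 2 × Fin k =>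
        ∑ b : Fin 2, ρ (p.1, b, p.2) (q.1, b, q.2)) = singletMatK k := by
  rintro ⟨ρ, hpsd, -, h3, h2⟩
  set c₀ : Fin k := ⟨0, hk⟩ with hc₀
  -- Step A : ρ((0,1,c₀),(0,1,c₀)) = 0
  have hA : ρ (0, 1, c₀) (0, 1, c₀) = 0 := by
    have := congrFun (congrFun h2 (0, c₀)) (0, c₀)
    simp only [Matrix.of_apply, Fin.sum_univ_two] at this
    have hrhs : singletMatK k ((0 : Fin 2), c₀) ((0 : Fin 2), c₀) = 0 := by
      simp [singletMatK, singletVecK, Matrix.vecMulVec_apply, singletVec, hc₀,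
        Prod.ext_iff, Fin.ext_iff]
    rw [hrhs] at this
    exact (sum_two_zero (psd_diag_real hpsd _) (psd_diag_real hpsd _) this).2
  -- Step B : for c ≠ c₀, ρ((1,0,c),(1,0,c)) = 0
  have hB : ∀ c : Fin k, c ≠ c₀ → ρ (1, 0, c) (1, 0, c) = 0 := by
    intro c hc
    have := congrFun (congrFun h2 (1, c)) (1, c)
    simp only [Matrix.of_apply, Fin.sum_univ_two] at this
    have hrhs : singletMatK k ((1 : Fin 2), c) ((1 : Fin 2), c) = 0 := by
      have hcv : (c : ℕ) ≠ 0 := by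
        intro h
        exact hc (Fin.ext h)
      by_cases h : (c : ℕ) < 2
      · have : (c : ℕ) = 1 := by omega
        simp [singletMatK, singletVecK, Matrix.vecMulVec_apply, singletVec, h, this,
          Prod.ext_iff, Fin.ext_iff]
      · simp [singletMatK, singletVecK, Matrix.vecMulVec_apply, h]
    rw [hrhs] at this
    exact (sum_two_zero (psd_diag_real hpsd _) (psd_diag_real hpsd _) this).1
  -- Step C : contradiction via off-diagonal entry
  have hC := congrFun (congrFun h3 (0, 1)) (1, 0)
  simp only [Matrix.of_apply] at hC
  have hzero : ∑ c : Fin k, ρ ((0 : Fin 2), (1 : Fin 2), c) ((1 : Fin 2), (0 : Fin 2), c) = 0 := by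
    apply Finset.sum_eq_zero
    intro c _
    by_cases h : c = c₀
    · subst h
      exact psd_row_zero hpsd hA _
    · exact psd_col_zero hpsd (hB c h) _
  rw [hzero] at hC
  have hrhs : singletMat ((0 : Fin 2), (1 : Fin 2)) ((1 : Fin 2), (0 : Fin 2)) = -(1/2 : ℂ) := by
    simp [singletMat, Matrix.vecMulVec_apply, singletVec, Prod.ext_iff, Fin.ext_iff,
      Complex.ext_iff]
    nlinarith [Real.mul_self_sqrt (show (0:ℝ) ≤ 2 by norm_num)]
  rw [hrhs] at hC
  norm_num at hC
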